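/- arXiv:math/0101183 — 4 statements merged into one kernel-verified Lean document; each statement's English description precedes it below -/
import Mathlib

section
/- Let r be a positive integer, q a real number with q > 1, \gamma a nonzero real number, and c_1, ..., c_r real numbers. Define P(t) = 1 + \sum_{i=1}^{r-1} c_i t^i + c_r t^r + \sum_{i=1}^{r-1} c_i q^{r-i} t^{2r-i} + q^r t^{2r} and Z(t) = \gamma P(t)/((1-t^r)(1-q^r t^r)). Then for every nonzero real t with t^r \ne 1, q^r t^r \ne 1, (q t)^r \ne 1 and q^r \ne (q t)^r (i.e. both denominators are nonzero), one has Z(1/(q t)) = Z(t). (Combined with the Fundamental Identity Z_{E,r,F_q}(t) = \gamma_{E,r}(0) P_{E,r,F_q}(t)/((1-t^r)(1-q^r t^r)), this is the functional equation \zeta_{E,r,F_q}(s) = \zeta_{E,r,F_q}(1-s) of Theorem 3.1.2(2), since t = q^{-s} and s \mapsto 1-s corresponds to t \mapsto 1/(qt).) -/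
open Finset in
/-- The functional equation Z(1/(qt)) = Z(t) for the rank-r non-abelian local zeta
function of an elliptic curve (Theorem 3.1.2(2): ζ_{E,r,F_q}(s) = ζ_{E,r,F_q}(1-s)). -/
theorem stmt_6 (r : ℕ) (hr : 0 < r) (q : ℝ) (hq : 1 < q) (γ : ℝ) (hγ : γ ≠ 0)
    (c : ℕ → ℝ) (P Z : ℝ → ℝ)
    (hP : ∀ t : ℝ, P t =
      1 + (∑ i ∈ Finset.Icc 1 (r - 1), c i * t ^ i) + c r * t ^ r +
        (∑ i ∈ Finset.Icc 1 (r - 1), c i * q ^ (r - i) * t ^ (2 * r - i)) +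
        q ^ r * t ^ (2 * r))
    (hZ : ∀ t : ℝ, Z t = γ * P t / ((1 - t ^ r) * (1 - q ^ r * t ^ r))) :
    ∀ t : ℝ, t ≠ 0 → t ^ r ≠ 1 → q ^ r * t ^ r ≠ 1 → (q * t) ^ r ≠ 1 →
      q ^ r ≠ (q * t) ^ r → Z (1 / (q * t)) = Z t := by
  intro t ht h1 h2 h3 h4
  have hq0 : q ≠ 0 := by positivity
  have hqt : q * t ≠ 0 := mul_ne_zero hq0 ht
  set u : ℝ := 1 / (q * t) with hu
  set K : ℝ := q ^ r * t ^ (2 * r) with hK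
  have hK0 : K ≠ 0 := mul_ne_zero (pow_ne_zero _ hq0) (pow_ne_zero _ ht)
  have hsum1 : ∀ i ∈ Finset.Icc 1 (r - 1),
      c i * u ^ i * K = c i * q ^ (r - i) * t ^ (2 * r - i) := by
    intro i hi
    obtain ⟨hi1, hi2⟩ := Finset.mem_Icc.mp hi
    have hir : i ≤ r := by omega
    have hi2r : i ≤ 2 * r := by omega
    rw [hK, ← pow_sub_mul_pow q hir, ← pow_sub_mul_pow t hi2r, hu]
    field_simp
    rw [div_pow, one_pow, mul_pow]; field_simp
  have hsum2 : ∀ i ∈ Finset.Icc 1 (r - 1),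
      c i * q ^ (r - i) * u ^ (2 * r - i) * K = c i * t ^ i := by
    intro i hi
    obtain ⟨hi1, hi2⟩ := Finset.mem_Icc.mp hi
    have hir : i ≤ r := by omega
    have e1 : r - i + r = 2 * r - i := by omega
    have e2 : 2 * r - i + i = 2 * r := by omega
    have hqq : q ^ (r - i) * q ^ r = q ^ (2 * r - i) := by rw [← pow_add, e1]
    have htt : t ^ (2 * r - i) * t ^ i = t ^ (2 * r) := by rw [← pow_add, e2]
    rw [hK, hu, div_pow, one_pow, mul_pow, ← hqq, ← htt]
    field_simp
  have hcr : c r * u ^ r * K = c r * t ^ r := by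
    have : t ^ r * t ^ r = t ^ (2 * r) := by rw [← pow_add]; ring_nf
    rw [hK, hu, ← this]
    field_simp
    rw [div_pow, one_pow, mul_pow]; field_simp
  have hlast : q ^ r * u ^ (2 * r) * K = 1 := by
    have hq2 : q ^ r * q ^ r = q ^ (2 * r) := by rw [← pow_add]; ring_nf
    have ht2 : t ^ r * t ^ r = t ^ (2 * r) := by rw [← pow_add]; ring_nf
    rw [hK, hu, div_pow, one_pow, mul_pow, ← hq2, ← ht2]
    field_simp
  have hPkey : P u * K = P t := by
    rw [hP u, hP t]
    rw [add_mul, add_mul, add_mul, add_mul, Finset.sum_mul, Finset.sum_mul]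
    rw [Finset.sum_congr rfl hsum1, Finset.sum_congr rfl hsum2, hcr, hlast, one_mul]
    ring
  have hur : u ^ r = 1 / (q ^ r * t ^ r) := by
    rw [hu, div_pow, one_pow, mul_pow]
  have hDkey : (1 - u ^ r) * (1 - q ^ r * u ^ r) * K = (1 - t ^ r) * (1 - q ^ r * t ^ r) := by
    rw [hur, hK]
    have h2r : t ^ (2 * r) = t ^ r * t ^ r := by rw [← pow_add]; ring_nf
    rw [h2r]
    field_simp
    ring
  have hDt : (1 - t ^ r) * (1 - q ^ r * t ^ r) ≠ 0 :=
    mul_ne_zero (sub_ne_zero.mpr fun h => h1 h.symm) (sub_ne_zero.mpr fun h => h2 h.symm)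
  have hDu : (1 - u ^ r) * (1 - q ^ r * u ^ r) ≠ 0 := by
    intro h
    apply hDt
    rw [← hDkey, h, zero_mul]
  rw [hZ u, hZ t]
  rw [div_eq_div_iff hDu hDt]
  calc γ * P u * ((1 - t ^ r) * (1 - q ^ r * t ^ r))
      = γ * P u * ((1 - u ^ r) * (1 - q ^ r * u ^ r) * K) := by rw [hDkey]
    _ = γ * (P u * K) * ((1 - u ^ r) * (1 - q ^ r * u ^ r)) := by ring
    _ = γ * P t * ((1 - u ^ r) * (1 - q ^ r * u ^ r)) := by rw [hPkey]
end

section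
/- For every real number s > 2, the infinite product over all primes p \ge 3 of the factors (1 + (p-1) p^{-s} + (2p-4) p^{-2s} + (p^2-p) p^{-3s} + p^2 p^{-4s})^{-1} converges (the family of factors indexed by primes p \ge 3 is multipliable). This is the rank-2 global non-abelian zeta function E_2(s) = \prod_{p \ge 3 prime} (1 + (p-1)p^{-s} + (2p-4)p^{-2s} + (p^2-p)p^{-3s} + p^2 p^{-4s})^{-1} over Q, and it converges for Re(s) > 2. -/
open Real

private lemma stmt7_bound (x s : ℝ) (hx : 3 ≤ x) (hs : 2 < s) :
    (x - 1) * x ^ (-s) + (2 * x - 4) * x ^ (-(2 * s)) + (x ^ 2 - x) * x ^ (-(3 * s)) +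
      x ^ 2 * x ^ (-(4 * s)) ≤ 5 * x ^ (1 - s) := by
  have hx0 : (0:ℝ) < x := by linarith
  have hx1 : (1:ℝ) ≤ x := by linarith
  have e1 : x * x ^ (-s) = x ^ (1 - s) := by
    rw [sub_eq_add_neg, Real.rpow_add hx0, Real.rpow_one]
  have e2 : x * x ^ (-(2 * s)) = x ^ (1 - 2 * s) := by
    rw [sub_eq_add_neg, Real.rpow_add hx0, Real.rpow_one]
  have e3 : x ^ 2 * x ^ (-(3 * s)) = x ^ (2 - 3 * s) := by
    rw [sub_eq_add_neg, Real.rpow_add hx0, ← Real.rpow_natCast x 2]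
    norm_num
  have e4 : x ^ 2 * x ^ (-(4 * s)) = x ^ (2 - 4 * s) := by
    rw [sub_eq_add_neg, Real.rpow_add hx0, ← Real.rpow_natCast x 2]
    norm_num
  have h1 : (x - 1) * x ^ (-s) ≤ x ^ (1 - s) := by
    rw [← e1]
    exact mul_le_mul_of_nonneg_right (by linarith) (Real.rpow_nonneg hx0.le _)
  have h2 : (2 * x - 4) * x ^ (-(2 * s)) ≤ 2 * x ^ (1 - s) := by
    have : (2 * x - 4) * x ^ (-(2 * s)) ≤ 2 * (x * x ^ (-(2 * s))) := by
      have := Real.rpow_nonneg hx0.le (-(2 * s))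
      nlinarith
    refine this.trans ?_
    rw [e2]
    have := Real.rpow_le_rpow_of_exponent_le hx1 (by linarith : 1 - 2 * s ≤ 1 - s)
    linarith
  have h3 : (x ^ 2 - x) * x ^ (-(3 * s)) ≤ x ^ (1 - s) := by
    have : (x ^ 2 - x) * x ^ (-(3 * s)) ≤ x ^ 2 * x ^ (-(3 * s)) := by
      have := Real.rpow_nonneg hx0.le (-(3 * s))
      nlinarith
    refine this.trans ?_
    rw [e3]
    exact Real.rpow_le_rpow_of_exponent_le hx1 (by linarith)
  have h4 : x ^ 2 * x ^ (-(4 * s)) ≤ x ^ (1 - s) := by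
    rw [e4]
    exact Real.rpow_le_rpow_of_exponent_le hx1 (by linarith)
  linarith

private lemma stmt7_nonneg (x s : ℝ) (hx : 3 ≤ x) :
    0 ≤ (x - 1) * x ^ (-s) + (2 * x - 4) * x ^ (-(2 * s)) + (x ^ 2 - x) * x ^ (-(3 * s)) +
      x ^ 2 * x ^ (-(4 * s)) := by
  have hx0 : (0:ℝ) < x := by linarith
  have a1 := Real.rpow_nonneg hx0.le (-s)
  have a2 := Real.rpow_nonneg hx0.le (-(2 * s))
  have a3 := Real.rpow_nonneg hx0.le (-(3 * s))
  have a4 := Real.rpow_nonneg hx0.le (-(4 * s))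
  have h : 0 ≤ x ^ 2 - x := by nlinarith
  have h2 : 0 ≤ x ^ 2 := by positivity
  exact add_nonneg (add_nonneg (add_nonneg (mul_nonneg (by linarith) a1)
    (mul_nonneg (by linarith) a2)) (mul_nonneg h a3)) (mul_nonneg h2 a4)

/-- Convergence for Re(s) > 2 of the rank-2 global non-abelian zeta function
E₂(s) = ∏_{p ≥ 3 prime} (1 + (p-1)p^{-s} + (2p-4)p^{-2s} + (p²-p)p^{-3s} + p²p^{-4s})⁻¹
over ℚ. -/
theorem stmt_7 (s : ℝ) (hs : 2 < s) :
    Multipliable fun p : {p : ℕ // Nat.Prime p ∧ 3 ≤ p} =>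
      (1 + ((p.1 : ℝ) - 1) * (p.1 : ℝ) ^ (-s) + (2 * (p.1 : ℝ) - 4) * (p.1 : ℝ) ^ (-(2 * s)) +
          ((p.1 : ℝ) ^ 2 - (p.1 : ℝ)) * (p.1 : ℝ) ^ (-(3 * s)) +
          (p.1 : ℝ) ^ 2 * (p.1 : ℝ) ^ (-(4 * s)))⁻¹ := by
  set ι := {p : ℕ // Nat.Prime p ∧ 3 ≤ p}
  set g : ι → ℝ := fun p =>
    ((p.1 : ℝ) - 1) * (p.1 : ℝ) ^ (-s) + (2 * (p.1 : ℝ) - 4) * (p.1 : ℝ) ^ (-(2 * s)) +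
      ((p.1 : ℝ) ^ 2 - (p.1 : ℝ)) * (p.1 : ℝ) ^ (-(3 * s)) +
      (p.1 : ℝ) ^ 2 * (p.1 : ℝ) ^ (-(4 * s)) with hg
  have hx : ∀ p : ι, (3:ℝ) ≤ (p.1 : ℝ) := fun p => by exact_mod_cast p.2.2
  have hgnn : ∀ p : ι, 0 ≤ g p := fun p => stmt7_nonneg _ s (hx p)
  have hpos : ∀ p : ι, 0 < 1 + g p := fun p => by linarith [hgnn p]
  -- summability of the logs
  have hsum : Summable fun p : ι => Real.log ((1 + g p)⁻¹) := by
    have hb : Summable fun p : ι => 5 * (p.1 : ℝ) ^ (1 - s) := by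
      have h0 : Summable fun n : ℕ => (n : ℝ) ^ (1 - s) :=
        Real.summable_nat_rpow.mpr (by linarith)
      exact (h0.comp_injective Subtype.val_injective).mul_left 5
    have hnn : ∀ p : ι, 0 ≤ -Real.log ((1 + g p)⁻¹) := by
      intro p
      rw [Real.log_inv, neg_neg]
      exact Real.log_nonneg (by linarith [hgnn p])
    have hle : ∀ p : ι, -Real.log ((1 + g p)⁻¹) ≤ 5 * (p.1 : ℝ) ^ (1 - s) := by
      intro p
      rw [Real.log_inv, neg_neg]
      calc Real.log (1 + g p) ≤ 1 + g p - 1 := Real.log_le_sub_one_of_pos (hpos p)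
        _ = g p := by ring
        _ ≤ 5 * (p.1 : ℝ) ^ (1 - s) := stmt7_bound _ s (hx p) hs
    have := Summable.of_nonneg_of_le hnn hle hb
    simpa using this.neg
  have key := Real.multipliable_of_summable_log (f := fun p => (1 + g p)⁻¹)
    (fun p => inv_pos.mpr (hpos p)) hsum
  simpa [hg, add_assoc] using key
end

section
/- Let q and t be real numbers with q > 1 and 0 < t < 1/q. For each integer d \ge 1 let S_d = \sum_{(d_1,d_2)} (q^d - 1) q^{d_2 - d_1}, the (finite) sum over pairs of integers with d_1 + d_2 = d and d_1 > d_2 > 0. Then the series \sum_{d=1}^{\infty} S_d t^d / (q-1)^2 converges and equals t^3 (q^2+q+1+q^2 t) / ((q-1)(1-t^2)(1-q^2 t^2)(q-t)). (This is the paper's evaluation of the case-(i) contribution \sum_{(i)} (q^{h^0(V)}-1)/#Aut(V) \cdot t^d of non-semi-stable rank-2 bundles V = L_1 \oplus L_2 of degree d = d_1 + d_2 with d_1 > d_2 > 0, for which h^0(V) = d and #Aut(V) = (q-1)^2 q^{d_1 - d_2}, up to the overall factor N_1^2.) -/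
set_option maxHeartbeats 1000000 in
open Finset in
/-- Case (i), positive degree: with S_d = ∑_{d₁+d₂=d, d₁>d₂>0} (q^d - 1) q^{d₂-d₁}
(here d₁ = d - j, d₂ = j with 0 < j and 2j < d, so q^{d₂-d₁} = 1/q^{d-2j}),
∑_{d≥1} S_d t^d/(q-1)² = t³(q²+q+1+q²t)/((q-1)(1-t²)(1-q²t²)(q-t)). -/
theorem stmt_9 (q t : ℝ) (hq : 1 < q) (ht0 : 0 < t) (ht : t < 1 / q)
    (S : ℕ → ℝ)
    (hS : ∀ d : ℕ, S d =
      ∑ j ∈ (Finset.Ico 1 d).filter (fun j => 2 * j < d), (q ^ d - 1) / q ^ (d - 2 * j)) :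
    HasSum (fun d : ℕ => S (d + 1) * t ^ (d + 1) / (q - 1) ^ 2)
      (t ^ 3 * (q ^ 2 + q + 1 + q ^ 2 * t) /
        ((q - 1) * (1 - t ^ 2) * (1 - q ^ 2 * t ^ 2) * (q - t))) := by
  have hq0 : (0:ℝ) < q := by linarith
  have hq0' : q ≠ 0 := ne_of_gt hq0
  have hqt : q * t < 1 := by
    have := (lt_div_iff₀ hq0).mp ht; linarith [this]
  have hqt0 : 0 < q * t := mul_pos hq0 ht0
  have ht1 : t < 1 := by nlinarith
  have hq2 : q ^ 2 ≠ 1 := by nlinarith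
  have hq21 : q ^ 2 - 1 ≠ 0 := by nlinarith
  have hq1 : q - 1 ≠ 0 := by linarith
  have hq20 : (q:ℝ) ^ 2 ≠ 0 := by positivity
  -- closed form for S (k+1)
  have hSc : ∀ k : ℕ, S (k + 1) =
      (q ^ (k+1) - 1) * ((q ^ 2) ^ (k/2 + 1) - q ^ 2) / (q ^ (k+1) * (q ^ 2 - 1)) := by
    intro k
    rw [hS]
    have hfil : (Finset.Ico 1 (k+1)).filter (fun j => 2 * j < k+1)
        = Finset.Ico 1 (k/2 + 1) := by
      ext j; simp only [Finset.mem_filter, Finset.mem_Ico]; omega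
    rw [hfil]
    have hterm : ∀ j ∈ Finset.Ico 1 (k/2+1),
        (q ^ (k+1) - 1) / q ^ (k+1 - 2*j)
          = (q ^ (k+1) - 1) / q ^ (k+1) * (q ^ 2) ^ j := by
      intro j hj
      simp only [Finset.mem_Ico] at hj
      have h2j : 2*j ≤ k := by omega
      have hrw : q ^ (k+1) = q ^ (k+1-2*j) * (q^2) ^ j := by
        rw [← pow_mul, ← pow_add]; congr 1; omega
      have hne1 : q ^ (k+1-2*j) ≠ 0 := pow_ne_zero _ hq0'
      have hne2 : ((q:ℝ)^2) ^ j ≠ 0 := pow_ne_zero _ hq20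
      rw [hrw]
      field_simp
    rw [Finset.sum_congr rfl hterm, ← Finset.mul_sum,
      geom_sum_Ico hq2 (by omega), pow_one]
    have hne : q ^ (k+1) ≠ 0 := pow_ne_zero _ hq0'
    field_simp
  set C : ℝ := (q ^ 2 - 1) * (q - 1) ^ 2 with hC
  have hpos : 0 < 1 - q^2*t^2 := by nlinarith
  have hpos2 : 0 < 1 - t^2 := by nlinarith
  have hpos3 : 0 < 1 - t^2/q^2 := by
    have : t^2/q^2 < 1 := by
      rw [div_lt_one (by positivity)]; nlinarith
    linarith
  have h1 : HasSum (fun k : ℕ => (q^2*t^2) ^ k) (1 - q^2*t^2)⁻¹ :=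
    hasSum_geometric_of_lt_one (by positivity) (by nlinarith)
  have h2 : HasSum (fun k : ℕ => (t^2) ^ k) (1 - t^2)⁻¹ :=
    hasSum_geometric_of_lt_one (by positivity) (by nlinarith)
  have h3 : HasSum (fun k : ℕ => (t^2/q^2) ^ k) (1 - t^2/q^2)⁻¹ :=
    hasSum_geometric_of_lt_one (by positivity) (by linarith)
  have hC0 : C ≠ 0 := by
    rw [hC]; exact mul_ne_zero hq21 (pow_ne_zero _ hq1)
  -- even part
  have hE : HasSum (fun k : ℕ => S (2*k + 1) * t ^ (2*k + 1) / (q - 1) ^ 2)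
      (q*t/C * (q * (1 - q^2*t^2)⁻¹ - (q+1) * (1 - t^2)⁻¹ + (1 - t^2/q^2)⁻¹)) := by
    have H := ((h1.mul_left (q*t/C*q)).sub (h2.mul_left (q*t/C*(q+1)))).add
      (h3.mul_left (q*t/C))
    have heq : (fun k : ℕ => S (2*k + 1) * t ^ (2*k + 1) / (q - 1) ^ 2)
        = fun k => q*t/C*q * (q^2*t^2)^k - q*t/C*(q+1) * (t^2)^k + q*t/C * (t^2/q^2)^k := by
      funext k
      rw [hSc (2*k)]
      have h2 : (2*k)/2 + 1 = k + 1 := by omega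
      have e1 : q ^ (2*k+1) = (q^2)^k * q := by rw [pow_succ, pow_mul]
      have e2 : t ^ (2*k+1) = (t^2)^k * t := by rw [pow_succ, pow_mul]
      have e3 : ((q:ℝ)^2)^(k+1) = (q^2)^k * q^2 := pow_succ _ _
      have e4 : ((q:ℝ)^2*t^2)^k = (q^2)^k * (t^2)^k := mul_pow _ _ _
      have e5 : (t^2/q^2)^k = (t^2)^k / ((q:ℝ)^2)^k := div_pow _ _ _
      rw [h2, e1, e2, e3, e4, e5, hC]
      have ha : ((q:ℝ)^2)^k ≠ 0 := pow_ne_zero _ hq20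
      generalize ((q:ℝ)^2)^k = a at ha ⊢
      generalize ((t:ℝ)^2)^k = b
      field_simp
      ring
    rw [heq]
    convert H using 1
    · rfl
    ring
  -- odd part
  have hO : HasSum (fun k : ℕ => S (2*k + 1 + 1) * t ^ (2*k + 1 + 1) / (q - 1) ^ 2)
      (t^2/C * (q^2 * (1 - q^2*t^2)⁻¹ - (q^2+1) * (1 - t^2)⁻¹ + (1 - t^2/q^2)⁻¹)) := by
    have H := ((h1.mul_left (t^2/C*q^2)).sub (h2.mul_left (t^2/C*(q^2+1)))).add
      (h3.mul_left (t^2/C))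
    have heq : (fun k : ℕ => S (2*k + 1 + 1) * t ^ (2*k + 1 + 1) / (q - 1) ^ 2)
        = fun k => t^2/C*q^2 * (q^2*t^2)^k - t^2/C*(q^2+1) * (t^2)^k + t^2/C * (t^2/q^2)^k := by
      funext k
      rw [hSc (2*k+1)]
      have h2 : (2*k+1)/2 + 1 = k + 1 := by omega
      have e1 : q ^ (2*k+1+1) = (q^2)^k * q^2 := by
        rw [show 2*k+1+1 = 2*(k+1) by ring, pow_mul, pow_succ]
      have e2 : t ^ (2*k+1+1) = (t^2)^k * t^2 := by
        rw [show 2*k+1+1 = 2*(k+1) by ring, pow_mul, pow_succ]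
      have e3 : ((q:ℝ)^2)^(k+1) = (q^2)^k * q^2 := pow_succ _ _
      have e4 : ((q:ℝ)^2*t^2)^k = (q^2)^k * (t^2)^k := mul_pow _ _ _
      have e5 : (t^2/q^2)^k = (t^2)^k / ((q:ℝ)^2)^k := div_pow _ _ _
      rw [h2, e1, e2, e3, e4, e5, hC]
      have ha : ((q:ℝ)^2)^k ≠ 0 := pow_ne_zero _ hq20
      generalize ((q:ℝ)^2)^k = a at ha ⊢
      generalize ((t:ℝ)^2)^k = b
      field_simp
      ring
    rw [heq]
    convert H using 1
    · rfl
    ring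
  have hsum : HasSum (fun d : ℕ => S (d + 1) * t ^ (d + 1) / (q - 1) ^ 2)
      ((q*t/C * (q * (1 - q^2*t^2)⁻¹ - (q+1) * (1 - t^2)⁻¹ + (1 - t^2/q^2)⁻¹)) +
       (t^2/C * (q^2 * (1 - q^2*t^2)⁻¹ - (q^2+1) * (1 - t^2)⁻¹ + (1 - t^2/q^2)⁻¹))) :=
    HasSum.even_add_odd (f := fun d : ℕ => S (d + 1) * t ^ (d + 1) / (q - 1) ^ 2) hE hO
  convert hsum using 1
  have e1 : (1 - q^2*t^2) ≠ 0 := ne_of_gt hpos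
  have e2 : (1 - t^2) ≠ 0 := ne_of_gt hpos2
  have e3 : (1 - t^2/q^2) ≠ 0 := ne_of_gt hpos3
  have e4 : q - t ≠ 0 := by nlinarith
  have e6 : q^2 - t^2 ≠ 0 := by nlinarith
  rw [hC]
  have e1' : 1 - t^2*q^2 ≠ 0 := by nlinarith
  field_simp [e1, e2, e3, e4, e6, e1']
  ring
end

section
/- Let q and t be real numbers with q > 1 and 0 < t < 1. For each integer d \ge 1 let S_d = \sum_{k=1}^{\infty} (q^{d+k} - 1) q^{-(d+2k)} (the sum over pairs d_1 = d + k > 0 > d_2 = -k with d_1 + d_2 = d, each term being (q^{d_1}-1) q^{d_2 - d_1}); each S_d converges. Then \sum_{d=1}^{\infty} S_d t^d / (q-1)^2 converges and equals t/((q-1)^2 (q^2-1)) \cdot (q^2+q-1-q t)/((1-t)(q-t)). (This is the paper's evaluation, up to the overall factor N_1^2, of the case-(iii) contribution of the non-semi-stable rank-2 bundles V = L_1 \oplus L_2 of degree d \ge 1 with deg L_1 = d_1 > 0 > d_2 = deg L_2, for which h^0(V) = d_1 and #Aut(V) = (q-1)^2 q^{d_1 - d_2}.) -/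
lemma aux_hasSum_S (q : ℝ) (hq : 1 < q) (d : ℕ) :
    HasSum (fun k : ℕ => (q ^ (d + (k + 1)) - 1) / q ^ (d + 2 * (k + 1)))
      (1 / (q - 1) - (1 / q) ^ d / (q ^ 2 - 1)) := by
  have hq0 : (0:ℝ) < q := lt_trans one_pos hq
  have hqne : q ≠ 0 := ne_of_gt hq0
  have hr0 : (0:ℝ) ≤ 1 / q := by positivity
  have hr1 : 1 / q < 1 := by
    rw [div_lt_one hq0]; exact hq
  have h1 : HasSum (fun k : ℕ => (1/q) * (1/q) ^ k) ((1/q) * (1 - 1/q)⁻¹) :=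
    (hasSum_geometric_of_lt_one hr0 hr1).mul_left _
  have hr20 : (0:ℝ) ≤ (1/q)^2 := by positivity
  have hr21 : (1/q)^2 < 1 := by
    calc (1/q)^2 = (1/q)*(1/q) := sq (1/q)
    _ < 1*1 := by
        apply mul_lt_mul' (le_of_lt hr1) hr1 hr0 one_pos
    _ = 1 := by ring
  have h2 : HasSum (fun k : ℕ => ((1/q)^d * (1/q)^2) * ((1/q)^2) ^ k)
      (((1/q)^d * (1/q)^2) * (1 - (1/q)^2)⁻¹) :=
    (hasSum_geometric_of_lt_one hr20 hr21).mul_left _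
  have h3 := h1.sub h2
  have hq1 : q - 1 ≠ 0 := by nlinarith
  have hq2 : q + 1 ≠ 0 := by nlinarith
  convert h3 using 1
  · rfl
  · funext k
    have hpow : q ^ (d + 2 * (k + 1)) ≠ 0 := pow_ne_zero _ hqne
    simp only [div_pow, one_pow]
    field_simp
    ring
  · have h1q : (1:ℝ) - 1/q ≠ 0 := by
      have : 1/q < 1 := hr1
      intro h; rw [sub_eq_zero] at h; exact absurd h.symm (ne_of_lt this)
    have h2q : (1:ℝ) - (1/q)^2 ≠ 0 := by
      intro h; rw [sub_eq_zero] at h; exact absurd h.symm (ne_of_lt hr21)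
    have hq2' : q^2 - 1 ≠ 0 := by
      intro h
      apply hq1
      have : (q-1)*(q+1) = 0 := by nlinarith [h]
      rcases mul_eq_zero.mp this with h' | h'
      · exact h'
      · exact absurd h' hq2
    field_simp

/-- Case (iii), positive degree: with S_d = ∑_{k≥1} (q^{d+k} - 1) q^{-(d+2k)} (the sum over
d₁ = d+k > 0 > d₂ = -k with d₁+d₂ = d of (q^{d₁}-1) q^{d₂-d₁}), each S_d converges and
∑_{d≥1} S_d t^d/(q-1)² = t/((q-1)²(q²-1)) · (q²+q-1-qt)/((1-t)(q-t)). -/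
theorem stmt_12 (q t : ℝ) (hq : 1 < q) (ht0 : 0 < t) (ht : t < 1) :
    (∀ d : ℕ, 1 ≤ d →
        Summable fun k : ℕ => (q ^ (d + (k + 1)) - 1) / q ^ (d + 2 * (k + 1))) ∧
      HasSum
        (fun d : ℕ =>
          (∑' k : ℕ, (q ^ ((d + 1) + (k + 1)) - 1) / q ^ ((d + 1) + 2 * (k + 1))) *
            t ^ (d + 1) / (q - 1) ^ 2)
        (t / ((q - 1) ^ 2 * (q ^ 2 - 1)) * ((q ^ 2 + q - 1 - q * t) / ((1 - t) * (q - t)))) := by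
  have hq0 : (0:ℝ) < q := lt_trans one_pos hq
  have hqne : q ≠ 0 := ne_of_gt hq0
  have hq1 : q - 1 ≠ 0 := by nlinarith
  have hq2 : q + 1 ≠ 0 := by nlinarith
  have hq2' : q^2 - 1 ≠ 0 := by nlinarith
  have h1t : (1:ℝ) - t ≠ 0 := by nlinarith
  have hqt : q - t ≠ 0 := by nlinarith
  constructor
  · intro d _
    exact (aux_hasSum_S q hq d).summable
  · have hA : HasSum (fun d : ℕ => (1/((q-1)^3)) * (t * t ^ d))
        ((1/((q-1)^3)) * (t * (1 - t)⁻¹)) :=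
      ((hasSum_geometric_of_lt_one ht0.le ht).mul_left t).mul_left _
    have htq0 : (0:ℝ) ≤ t / q := by positivity
    have htq1 : t / q < 1 := by
      rw [div_lt_one hq0]; nlinarith
    have hB : HasSum (fun d : ℕ => (1/((q-1)^2*(q^2-1))) * ((t/q) * (t/q) ^ d))
        ((1/((q-1)^2*(q^2-1))) * ((t/q) * (1 - t/q)⁻¹)) :=
      ((hasSum_geometric_of_lt_one htq0 htq1).mul_left (t/q)).mul_left _
    have h3 := hA.sub hB
    have h1tq : (1:ℝ) - t/q ≠ 0 := by
      intro h; rw [sub_eq_zero] at h; exact absurd h.symm (ne_of_lt htq1)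
    convert h3 using 1
    · rfl
    · funext d
      rw [(aux_hasSum_S q hq (d+1)).tsum_eq]
      simp only [div_pow, one_pow]
      field_simp
      ring
    · field_simp
      ring
end
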